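/- Let L ⊆ G satisfy the (b,t,p)-torsion property, let C be the finite alphabet of letters (vertex- and edge-codewords with exponents ≤ t+p−1) occurring in reduced forms of words of L. If v ∈ C* has Parikh vector (over C) componentwise ≤ that of rf(w) for some w ∈ L, and every letter of C occurs at least once in v, then the graph ρ(v) belongs to ρ(L). -/

import Mathlib

abbrev GLetter := ℕ ⊕ (ℕ × ℕ)

def wordV (m : ℕ) : List Bool := false :: (List.replicate m true ++ [false])

def wordE (m n : ℕ) : List Bool :=
  false :: (List.replicate m true ++ [false, false, false] ++ List.replicate n true ++ [false])

def encL : GLetter → List Bool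
  | Sum.inl m => wordV m
  | Sum.inr q => wordE q.1 q.2

def encW (l : List GLetter) : List Bool := (l.map encL).flatten

def posL : GLetter → Prop
  | Sum.inl m => 1 ≤ m
  | Sum.inr q => 1 ≤ q.1 ∧ 1 ≤ q.2

def Gwords : Set (List Bool) :=
  {w | ∃ l : List GLetter, (∀ z ∈ l, posL z) ∧ w = encW l}

def SynEq {Γ : Type} (L : Set (List Γ)) (u v : List Γ) : Prop :=
  ∀ x y : List Γ, x ++ u ++ y ∈ L ↔ x ++ v ++ y ∈ L

def red (t p n : ℕ) : ℕ := if n < t then n else t + (n - t) % p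

def redL (t p : ℕ) : GLetter → GLetter
  | Sum.inl m => Sum.inl (red t p m)
  | Sum.inr q => Sum.inr (red t p q.1, red t p q.2)

/-- Exponents bounded by t + p - 1. -/
def expOK (t p : ℕ) : GLetter → Prop
  | Sum.inl m => m ≤ t + p - 1
  | Sum.inr q => q.1 ≤ t + p - 1 ∧ q.2 ≤ t + p - 1

/-- The finite alphabet `C` of (positive) letters with exponents ≤ t+p−1 occurring
in reduced forms of words of `L`. -/
def Cset (L : Set (List Bool)) (t p : ℕ) : Set GLetter :=
  {z | posL z ∧ expOK t p z ∧
    ∃ w ∈ L, ∃ lw : List GLetter, (∀ y ∈ lw, posL y) ∧ encW lw = w ∧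
      z ∈ lw.map (redL t p)}

/-- The graph ρ(u): vertices are factors `a b^m a`, edges are factors
`a b^m a a a b^n a`. -/
def rhoV (w : List Bool) : Set ℕ := {m | 1 ≤ m ∧ wordV m <:+: w}

def rhoE (w : List Bool) : Set (ℕ × ℕ) :=
  {q | 1 ≤ q.1 ∧ 1 ≤ q.2 ∧ wordE q.1 q.2 <:+: w}

/-- Isomorphism of the (finite, ℕ-labelled) graphs, as equality up to a
relabelling of ℕ. -/
def GraphIso (G H : Set ℕ × Set (ℕ × ℕ)) : Prop :=
  ∃ f : ℕ ≃ ℕ, (∀ m, m ∈ G.1 ↔ f m ∈ H.1) ∧ (∀ q : ℕ × ℕ, q ∈ G.2 ↔ (f q.1, f q.2) ∈ H.2)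

lemma encW_nil : encW [] = [] := rfl
lemma encW_cons (z l) : encW (z :: l) = encL z ++ encW l := by simp [encW]

lemma infix_tri {α : Type} {u A B : List α} (h : u <:+: A ++ B) :
    u <:+: A ∨ u <:+: B ∨
    ∃ u₁ u₂, u = u₁ ++ u₂ ∧ u₁ ≠ [] ∧ u₂ ≠ [] ∧ u₁ <:+ A ∧ u₂ <+: B := by
  obtain ⟨s, t, hst⟩ := h
  rcases List.append_eq_append_iff.1 hst with ⟨a', hA, ht⟩ | ⟨c', hsu, hB⟩
  · left; exact ⟨s, a', by rw [hA, List.append_assoc]⟩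
  · rcases List.append_eq_append_iff.1 hsu with ⟨x, hA, hu⟩ | ⟨y, hs, hc⟩
    · rcases eq_or_ne x [] with rfl | hx
      · right; left
        exact List.IsPrefix.isInfix ⟨t, by simp [hu, hB]⟩
      · rcases eq_or_ne c' [] with rfl | hc
        · left
          refine ⟨s, [], ?_⟩
          simp [hA, hu]
        · right; right
          exact ⟨x, c', hu, hx, hc, ⟨s, hA.symm⟩, ⟨t, hB.symm⟩⟩
    · right; left
      exact ⟨y, t, by rw [hB, hc, List.append_assoc]⟩

lemma prefix_shape {u r : List Bool} (h : u <+: (false :: true :: r)) (hu : u ≠ []) :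
    u = [false] ∨ ∃ r', u = false :: true :: r' := by
  match u, h with
  | [], _ => exact absurd rfl hu
  | [x], ⟨s, hs⟩ => left; simp at hs; simp [hs.1]
  | (x :: y :: u'), ⟨s, hs⟩ =>
    right
    simp at hs
    exact ⟨u', by simp [hs.1, hs.2.1]⟩

lemma suffix_shape {u r : List Bool} (h : u <:+ (r ++ [true, false])) (hu : u ≠ []) :
    u = [false] ∨ ∃ r', u = r' ++ [true, false] := by
  have h' : u.reverse <+: (false :: true :: r.reverse) := by
    obtain ⟨s, hs⟩ := h
    exact ⟨s.reverse, by have := congrArg List.reverse hs; simpa [List.reverse_append] using this⟩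
  rcases prefix_shape h' (by simpa using hu) with h1 | ⟨r', h1⟩
  · left; have := congrArg List.reverse h1; simpa using this
  · right
    refine ⟨r'.reverse, ?_⟩
    have := congrArg List.reverse h1; simpa using this

lemma encL_start {z : GLetter} (hz : posL z) : ∃ r, encL z = false :: true :: r := by
  match z, hz with
  | Sum.inl m, hz =>
    obtain ⟨m', rfl⟩ : ∃ m', m = m' + 1 := ⟨m - 1, by have h1 : 1 ≤ m := hz; omega⟩
    exact ⟨List.replicate m' true ++ [false], by simp [encL, wordV, List.replicate_succ]⟩
  | Sum.inr (a, b), hz =>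
    obtain ⟨a', rfl⟩ : ∃ a', a = a' + 1 := ⟨a - 1, by have := hz.1; omega⟩
    refine ⟨List.replicate a' true ++ [false, false, false] ++ List.replicate b true ++ [false], ?_⟩
    simp [encL, wordE, List.replicate_succ]

lemma encL_end {z : GLetter} (hz : posL z) : ∃ r, encL z = r ++ [true, false] := by
  match z, hz with
  | Sum.inl m, hz =>
    obtain ⟨m', rfl⟩ : ∃ m', m = m' + 1 := ⟨m - 1, by have h1 : 1 ≤ m := hz; omega⟩
    refine ⟨false :: List.replicate m' true, ?_⟩
    simp [encL, wordV, List.replicate_succ']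
  | Sum.inr (a, b), hz =>
    obtain ⟨b', rfl⟩ : ∃ b', b = b' + 1 := ⟨b - 1, by have := hz.2; omega⟩
    refine ⟨false :: (List.replicate a true ++ [false, false, false] ++ List.replicate b' true), ?_⟩
    simp [encL, wordE, List.replicate_succ']

lemma encW_start {l : List GLetter} (hl : ∀ z ∈ l, posL z) :
    encW l = [] ∨ ∃ r, encW l = false :: true :: r := by
  match l with
  | [] => left; rfl
  | z :: l' =>
    right
    obtain ⟨r, hr⟩ := encL_start (hl z (by simp))
    exact ⟨r ++ encW l', by simp [encW_cons, hr]⟩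

lemma reverse_wordV (m : ℕ) : (wordV m).reverse = wordV m := by
  simp [wordV, List.count_replicate]

lemma reverse_wordE (m n : ℕ) : (wordE m n).reverse = wordE n m := by
  simp [wordE, List.count_replicate]

lemma count_false_wordV (m : ℕ) : (wordV m).count false = 2 := by
  simp [wordV, List.count_replicate]

lemma count_false_wordE (m n : ℕ) : (wordE m n).count false = 5 := by
  simp [wordE, List.count_replicate]

lemma aux0 : ∀ (n : ℕ) (s r₂ : List Bool),
    List.replicate n true ++ [false] ≠ s ++ true :: false :: false :: true :: r₂ := by
  intro n
  induction n with
  | zero => intro s r₂ h; cases s <;> simp_all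
  | succ n ih =>
    intro s r₂ h
    rw [List.replicate_succ] at h
    cases s with
    | nil => rcases n with _ | n <;> simp_all [List.replicate_succ]
    | cons x s' =>
      simp only [List.cons_append, List.cons.injEq] at h
      exact ih s' r₂ h.2

lemma aux1 : ∀ (m n : ℕ) (s r₂ : List Bool),
    List.replicate m true ++ (false :: false :: false :: (List.replicate n true ++ [false])) ≠
      s ++ true :: false :: false :: true :: r₂ := by
  intro m
  induction m with
  | zero =>
    intro n s r₂ h
    match s, h with
    | [], h => simp at h
    | [x], h =>
      simp only [List.replicate_zero, List.nil_append, List.cons_append, List.cons.injEq] at h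
      rcases n with _ | n <;> simp_all [List.replicate_succ]
    | [x, y], h =>
      simp only [List.replicate_zero, List.nil_append, List.cons_append, List.cons.injEq] at h
      rcases n with _ | n <;> simp_all [List.replicate_succ]
    | x :: y :: z :: s', h =>
      simp only [List.replicate_zero, List.nil_append, List.cons_append, List.cons.injEq] at h
      exact aux0 n s' r₂ h.2.2.2
  | succ m ih =>
    intro n s r₂ h
    rw [List.replicate_succ] at h
    cases s with
    | nil => rcases m with _ | m <;> simp_all [List.replicate_succ]
    | cons x s' =>
      simp only [List.cons_append, List.cons.injEq] at h
      exact ih n s' r₂ h.2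

lemma wordE_eq (m n : ℕ) : wordE m n =
    false :: (List.replicate m true ++ (false :: false :: false :: (List.replicate n true ++ [false]))) := by
  simp [wordE]

lemma noTFFT (m n : ℕ) (r₁ r₂ : List Bool) :
    wordE m n ≠ r₁ ++ (true :: false :: false :: true :: r₂) := by
  intro h
  rw [wordE_eq] at h
  cases r₁ with
  | nil => simp at h
  | cons x r₁' =>
    simp only [List.cons_append, List.cons.injEq] at h
    exact aux1 m n r₁' r₂ h.2

lemma splitV {z : GLetter} {l : List GLetter} (hz : posL z) (hl : ∀ y ∈ l, posL y)
    {m : ℕ} (hm : 1 ≤ m) (h : wordV m <:+: encW (z :: l)) :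
    wordV m <:+: encL z ∨ wordV m <:+: encW l := by
  rw [encW_cons] at h
  rcases infix_tri h with h | h | ⟨u₁, u₂, hu, h1, h2, hs, hp⟩
  · left; exact h
  · right; exact h
  exfalso
  obtain ⟨m', rfl⟩ : ∃ m', m = m' + 1 := ⟨m - 1, by omega⟩
  have hu₂ : u₂ ≠ [] → ∃ r2, encW l = false :: true :: r2 := by
    intro _
    rcases encW_start hl with he | he
    · rw [he, List.prefix_nil] at hp; exact absurd hp h2
    · exact he
  obtain ⟨r2, he⟩ := hu₂ h2
  rw [he] at hp
  obtain ⟨r, hr⟩ := encL_end hz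
  rcases suffix_shape (hr ▸ hs) h1 with rfl | ⟨r', rfl⟩
  · -- u₁ = [false]
    have h3 : List.replicate (m' + 1) true ++ [false] = u₂ := by
      have := hu; simp [wordV] at this; exact this
    rcases prefix_shape hp h2 with rfl | ⟨r3, rfl⟩
    · simp [List.replicate_succ] at h3
    · simp [List.replicate_succ] at h3
  · rcases prefix_shape hp h2 with rfl | ⟨r3, rfl⟩
    · -- u = r' ++ [true,false] ++ [false]
      have h4 : wordV (m' + 1) = r' ++ [true, false, false] := by rw [hu]; simp
      have h5 := congrArg List.reverse h4
      rw [reverse_wordV] at h5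
      simp [wordV, List.replicate_succ, List.reverse_append] at h5
    · -- u = r' ++ [true,false,false,true] ++ r3
      have h4 : wordV (m' + 1) = r' ++ (true :: false :: false :: true :: r3) := by
        rw [hu]; simp
      have hc := congrArg (List.count false) h4
      rw [count_false_wordV] at hc
      simp [List.count_append, List.count_cons] at hc
      have hr0 : r'.count false = 0 := by omega
      cases r' with
      | nil => simp [wordV] at h4
      | cons x r'' =>
        have hx : x = false := by
          have := congrArg List.head? h4; simpa [wordV] using this
        rw [hx, List.count_cons_self] at hr0
        omega

lemma splitE {z : GLetter} {l : List GLetter} (hz : posL z) (hl : ∀ y ∈ l, posL y)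
    {m n : ℕ} (hm : 1 ≤ m) (hn : 1 ≤ n) (h : wordE m n <:+: encW (z :: l)) :
    wordE m n <:+: encL z ∨ wordE m n <:+: encW l := by
  rw [encW_cons] at h
  rcases infix_tri h with h | h | ⟨u₁, u₂, hu, h1, h2, hs, hp⟩
  · left; exact h
  · right; exact h
  exfalso
  obtain ⟨m', rfl⟩ : ∃ m', m = m' + 1 := ⟨m - 1, by omega⟩
  obtain ⟨n', rfl⟩ : ∃ n', n = n' + 1 := ⟨n - 1, by omega⟩
  have hu₂ : u₂ ≠ [] → ∃ r2, encW l = false :: true :: r2 := by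
    intro _
    rcases encW_start hl with he | he
    · rw [he, List.prefix_nil] at hp; exact absurd hp h2
    · exact he
  obtain ⟨r2, he⟩ := hu₂ h2
  rw [he] at hp
  obtain ⟨r, hr⟩ := encL_end hz
  rcases suffix_shape (hr ▸ hs) h1 with rfl | ⟨r', rfl⟩
  · -- u₁ = [false]
    have h3 : List.replicate (m' + 1) true ++
        (false :: false :: false :: (List.replicate (n' + 1) true ++ [false])) = u₂ := by
      have := hu; rw [wordE_eq] at this; simp at this; exact this
    rcases prefix_shape hp h2 with rfl | ⟨r3, rfl⟩
    · simp [List.replicate_succ] at h3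
    · simp [List.replicate_succ] at h3
  · rcases prefix_shape hp h2 with rfl | ⟨r3, rfl⟩
    · -- u = r' ++ [true,false,false]
      have h4 : wordE (m' + 1) (n' + 1) = r' ++ [true, false, false] := by rw [hu]; simp
      have h5 := congrArg List.reverse h4
      rw [reverse_wordE] at h5
      simp [wordE, List.replicate_succ, List.reverse_append] at h5
    · exact noTFFT (m' + 1) (n' + 1) r' r3 (by rw [hu]; simp)

lemma encL_infix {z : GLetter} {l : List GLetter} (hz : z ∈ l) : encL z <:+: encW l := by
  induction l with
  | nil => simp at hz
  | cons y l ih =>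
    rw [encW_cons]
    rcases List.mem_cons.1 hz with rfl | hz
    · exact (List.prefix_append _ _).isInfix
    · exact (ih hz).trans (List.suffix_append _ _).isInfix

lemma rhoV_char {l : List GLetter} (hl : ∀ y ∈ l, posL y) {m : ℕ} (hm : 1 ≤ m) :
    wordV m <:+: encW l ↔ ∃ z ∈ l, wordV m <:+: encL z := by
  constructor
  · intro h
    induction l with
    | nil =>
      exfalso
      rw [encW_nil, List.infix_nil] at h
      simp [wordV] at h
    | cons z l ih =>
      rcases splitV (hl z (by simp)) (fun y hy => hl y (by simp [hy])) hm h with h | h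
      · exact ⟨z, by simp, h⟩
      · obtain ⟨z', hz', h'⟩ := ih (fun y hy => hl y (by simp [hy])) h
        exact ⟨z', by simp [hz'], h'⟩
  · rintro ⟨z, hz, h⟩
    exact h.trans (encL_infix hz)

lemma rhoE_char {l : List GLetter} (hl : ∀ y ∈ l, posL y) {m n : ℕ} (hm : 1 ≤ m) (hn : 1 ≤ n) :
    wordE m n <:+: encW l ↔ ∃ z ∈ l, wordE m n <:+: encL z := by
  constructor
  · intro h
    induction l with
    | nil =>
      exfalso
      rw [encW_nil, List.infix_nil] at h
      simp [wordE] at h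
    | cons z l ih =>
      rcases splitE (hl z (by simp)) (fun y hy => hl y (by simp [hy])) hm hn h with h | h
      · exact ⟨z, by simp, h⟩
      · obtain ⟨z', hz', h'⟩ := ih (fun y hy => hl y (by simp [hy])) h
        exact ⟨z', by simp [hz'], h'⟩
  · rintro ⟨z, hz, h⟩
    exact h.trans (encL_infix hz)


lemma rho_eq_of_same_letters {l₁ l₂ : List GLetter} (h1 : ∀ y ∈ l₁, posL y)
    (h2 : ∀ y ∈ l₂, posL y) (hmem : ∀ z, z ∈ l₁ ↔ z ∈ l₂) :
    rhoV (encW l₁) = rhoV (encW l₂) ∧ rhoE (encW l₁) = rhoE (encW l₂) := by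
  constructor
  · ext m
    simp only [rhoV, Set.mem_setOf_eq]
    constructor
    · rintro ⟨hm, h⟩
      refine ⟨hm, (rhoV_char h2 hm).2 ?_⟩
      obtain ⟨z, hz, h'⟩ := (rhoV_char h1 hm).1 h
      exact ⟨z, (hmem z).1 hz, h'⟩
    · rintro ⟨hm, h⟩
      refine ⟨hm, (rhoV_char h1 hm).2 ?_⟩
      obtain ⟨z, hz, h'⟩ := (rhoV_char h2 hm).1 h
      exact ⟨z, (hmem z).2 hz, h'⟩
  · ext q
    simp only [rhoE, Set.mem_setOf_eq]
    constructor
    · rintro ⟨hm, hn, h⟩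
      refine ⟨hm, hn, (rhoE_char h2 hm hn).2 ?_⟩
      obtain ⟨z, hz, h'⟩ := (rhoE_char h1 hm hn).1 h
      exact ⟨z, (hmem z).1 hz, h'⟩
    · rintro ⟨hm, hn, h⟩
      refine ⟨hm, hn, (rhoE_char h1 hm hn).2 ?_⟩
      obtain ⟨z, hz, h'⟩ := (rhoE_char h2 hm hn).1 h
      exact ⟨z, (hmem z).2 hz, h'⟩

section Pump
variable {L : Set (List Bool)} {t p : ℕ}

lemma pump_run (htor : SynEq L (List.replicate t true) (List.replicate (t + p) true))
    (n : ℕ) (x y : List Bool) :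
    x ++ List.replicate n true ++ y ∈ L ↔ x ++ List.replicate (red t p n) true ++ y ∈ L := by
  by_cases hn : n < t
  · rw [red, if_pos hn]
  · push_neg at hn
    rw [red, if_neg (by omega)]
    have step : ∀ a : ℕ, x ++ List.replicate (a + (t + p)) true ++ y ∈ L ↔
        x ++ List.replicate (a + t) true ++ y ∈ L := by
      intro a
      have l1 : x ++ List.replicate (a + (t + p)) true ++ y =
          (x ++ List.replicate a true) ++ List.replicate (t + p) true ++ y := by
        rw [List.replicate_add]; simp
      have l2 : x ++ List.replicate (a + t) true ++ y =
          (x ++ List.replicate a true) ++ List.replicate t true ++ y := by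
        rw [List.replicate_add]; simp
      rw [l1, l2]
      exact (htor _ y).symm
    have key : ∀ k r, x ++ List.replicate (t + k * p + r) true ++ y ∈ L ↔
        x ++ List.replicate (t + r) true ++ y ∈ L := by
      intro k
      induction k with
      | zero => intro r; norm_num
      | succ k ih =>
        intro r
        have e1 : t + (k + 1) * p + r = (k * p + r) + (t + p) := by ring
        have e2 : (k * p + r) + t = t + k * p + r := by ring
        rw [e1, step, e2, ih]
    obtain ⟨k, hk⟩ : ∃ k, n = t + k * p + (n - t) % p :=
      ⟨(n - t) / p, by rw [Nat.add_assoc, Nat.div_add_mod']; omega⟩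
    conv_lhs => rw [hk]
    exact key k ((n - t) % p)

lemma pump_letter (htor : SynEq L (List.replicate t true) (List.replicate (t + p) true))
    (z : GLetter) (x y : List Bool) :
    x ++ encL z ++ y ∈ L ↔ x ++ encL (redL t p z) ++ y ∈ L := by
  match z with
  | Sum.inl m =>
    have e : ∀ k, x ++ encL (Sum.inl k) ++ y =
        (x ++ [false]) ++ List.replicate k true ++ ([false] ++ y) := by
      intro k; simp [encL, wordV]
    rw [show redL t p (Sum.inl m) = Sum.inl (red t p m) from rfl]
    rw [e, e]
    exact pump_run htor m _ _
  | Sum.inr (a, b) =>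
    have e : ∀ j k, x ++ encL (Sum.inr (j, k)) ++ y =
        (x ++ [false]) ++ List.replicate j true ++
          ([false, false, false] ++ List.replicate k true ++ ([false] ++ y)) := by
      intro j k; simp [encL, wordE]
    have e2 : ∀ j k, x ++ encL (Sum.inr (j, k)) ++ y =
        (x ++ [false] ++ List.replicate j true ++ [false, false, false]) ++
          List.replicate k true ++ ([false] ++ y) := by
      intro j k; simp [encL, wordE]
    rw [show redL t p (Sum.inr (a, b)) = Sum.inr (red t p a, red t p b) from rfl]
    have i1 : x ++ encL (Sum.inr (a, b)) ++ y ∈ L ↔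
        x ++ encL (Sum.inr (red t p a, b)) ++ y ∈ L := by
      rw [e a b, e (red t p a) b]
      exact pump_run htor a _ _
    have i2 : x ++ encL (Sum.inr (red t p a, b)) ++ y ∈ L ↔
        x ++ encL (Sum.inr (red t p a, red t p b)) ++ y ∈ L := by
      rw [e2 (red t p a) b, e2 (red t p a) (red t p b)]
      exact pump_run htor b _ _
    exact i1.trans i2

lemma pump_list (htor : SynEq L (List.replicate t true) (List.replicate (t + p) true))
    (l : List GLetter) (x y : List Bool) :
    x ++ encW l ++ y ∈ L ↔ x ++ encW (l.map (redL t p)) ++ y ∈ L := by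
  induction l generalizing x with
  | nil => simp [encW_nil]
  | cons z l ih =>
    rw [List.map_cons, encW_cons, encW_cons]
    rw [show x ++ (encL z ++ encW l) ++ y = x ++ encL z ++ (encW l ++ y) by simp]
    rw [pump_letter htor z]
    rw [show x ++ encL (redL t p z) ++ (encW l ++ y) =
      (x ++ encL (redL t p z)) ++ encW l ++ y by simp]
    rw [ih]
    simp

end Pump

lemma red_pos {t p n : ℕ} (ht : 1 ≤ t) (hn : 1 ≤ n) : 1 ≤ red t p n := by
  rw [red]; split <;> omega

lemma red_le {t p n : ℕ} (hp : 1 ≤ p) : red t p n ≤ t + p - 1 := by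
  rw [red]
  split
  · omega
  · have := Nat.mod_lt (n - t) hp
    omega

lemma encL_last (z : GLetter) : ∃ r, encL z = r ++ [false] := by
  match z with
  | Sum.inl m => exact ⟨false :: List.replicate m true, by simp [encL, wordV]⟩
  | Sum.inr (a, b) =>
    exact ⟨false :: (List.replicate a true ++ [false, false, false] ++ List.replicate b true),
      by simp [encL, wordE]⟩

lemma encW_last {l : List GLetter} (hl : l ≠ []) : ∃ r, encW l = r ++ [false] := by
  induction l with
  | nil => exact absurd rfl hl
  | cons z l ih =>
    rcases eq_or_ne l [] with rfl | hne
    · obtain ⟨r, hr⟩ := encL_last z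
      exact ⟨r, by simp [encW_cons, encW_nil, hr]⟩
    · obtain ⟨r, hr⟩ := ih hne
      exact ⟨encL z ++ r, by simp [encW_cons, hr]⟩

instance glawful : LawfulBEq GLetter where
  eq_of_beq {a b} h := by
    cases a <;> cases b
    · exact congrArg Sum.inl (by simpa using (show ((_ : ℕ) == _) = true from h))
    · exact absurd (show false = true from h) (by simp)
    · exact absurd (show false = true from h) (by simp)
    · exact congrArg Sum.inr (by simpa using (show ((_ : ℕ × ℕ) == _) = true from h))
  rfl {a} := by
    cases a
    · exact (show ((_ : ℕ) == _) = true by simp)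
    · exact (show ((_ : ℕ × ℕ) == _) = true by simp)

/-- If `v ∈ C^*` has Parikh vector componentwise below that of `rf(w)` for some
`w ∈ L`, and every letter of `C` occurs in `v`, then `ρ(v) ∈ ρ(L)`
(graphs taken up to isomorphism). -/
theorem stmt10 (L : Set (List Bool)) (hLG : L ⊆ Gwords) (t p : ℕ) (hp : 1 ≤ p)
    (htor : SynEq L (List.replicate t true) (List.replicate (t + p) true))
    (v : List GLetter) (w : List Bool) (hw : w ∈ L)
    (lw : List GLetter) (hlw : ∀ z ∈ lw, posL z) (henc : encW lw = w)
    (hvC : ∀ z ∈ v, z ∈ Cset L t p)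
    (hcount : ∀ z : GLetter, v.count z ≤ (lw.map (redL t p)).count z)
    (hall : ∀ z ∈ Cset L t p, z ∈ v) :
    ∃ w' ∈ L, GraphIso (rhoV (encW v), rhoE (encW v)) (rhoV w', rhoE w') := by
  rcases Nat.eq_zero_or_pos t with rfl | ht
  · -- degenerate case t = 0 : contradiction with L ⊆ Gwords
    exfalso
    have h1 : w ++ List.replicate (0 + p) true ++ ([] : List Bool) ∈ L := by
      apply (htor w []).1
      simpa using hw
    rw [List.append_nil] at h1
    obtain ⟨l, hlpos, hl⟩ := hLG h1
    have hne : l ≠ [] := by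
      rintro rfl
      rw [encW_nil] at hl
      have := congrArg List.length hl
      simp at this
      omega
    obtain ⟨r, hr⟩ := encW_last hne
    rw [hr] at hl
    obtain ⟨p', rfl⟩ : ∃ p', p = p' + 1 := ⟨p - 1, by omega⟩
    rw [Nat.zero_add, List.replicate_succ', ← List.append_assoc] at hl
    have := congrArg List.getLast? hl
    simp [List.getLast?_append] at this
  · -- main case t ≥ 1
    refine ⟨encW (lw.map (redL t p)), ?_, ?_⟩
    · have h1 : ([] : List Bool) ++ encW lw ++ ([] : List Bool) ∈ L := by
        simpa [henc] using hw
      have h2 := (pump_list htor lw [] []).1 h1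
      simpa using h2
    · have hposv : ∀ z ∈ v, posL z := fun z hz => (hvC z hz).1
      have hposl' : ∀ z ∈ lw.map (redL t p), posL z := by
        intro z hz
        rw [List.mem_map] at hz
        obtain ⟨y, hy, rfl⟩ := hz
        have hy' := hlw y hy
        match y, hy' with
        | Sum.inl m, hm => exact red_pos ht hm
        | Sum.inr (a, b), hab => exact ⟨red_pos ht hab.1, red_pos ht hab.2⟩
      have hmem : ∀ z, z ∈ v ↔ z ∈ lw.map (redL t p) := by
        intro z
        constructor
        · intro hz
          have h1 : 0 < v.count z := List.count_pos_iff.2 hz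
          exact List.count_pos_iff.1 (lt_of_lt_of_le h1 (hcount z))
        · intro hz
          apply hall
          refine ⟨hposl' z hz, ?_, w, hw, lw, hlw, henc, hz⟩
          rw [List.mem_map] at hz
          obtain ⟨y, hy, rfl⟩ := hz
          match y with
          | Sum.inl m => exact red_le hp
          | Sum.inr (a, b) => exact ⟨red_le hp, red_le hp⟩
      obtain ⟨hV, hE⟩ := rho_eq_of_same_letters hposv hposl' hmem
      refine ⟨Equiv.refl ℕ, ?_, ?_⟩
      · intro m
        show m ∈ rhoV (encW v) ↔ m ∈ rhoV (encW (lw.map (redL t p)))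
        rw [hV]
      · intro q
        show q ∈ rhoE (encW v) ↔ (q.1, q.2) ∈ rhoE (encW (lw.map (redL t p)))
        rw [hE]
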